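/- Let k be a field and let A be a locally finite ℕ-graded k-algebra with A_{≥1} ≠ 0. If A is projectively simple, then dim_k A/J < ∞ for every nonzero (not necessarily graded) two-sided ideal J of A; in other words, A is a just infinite dimensional algebra. -/

import Mathlib

/-!
STATEMENT 2: If `A` is a projectively simple locally finite ℕ-graded `k`-algebra with
`A_{≥1} ≠ 0`, then `dim_k A/J < ∞` for every nonzero (not necessarily graded) two-sided
ideal `J` of `A`; in other words, `A` is a just infinite dimensional algebra.
-/

/-- The underlying `k`-submodule of a two-sided ideal of a `k`-algebra. -/
def TwoSidedIdeal.ksub (k : Type*) {A : Type*} [CommSemiring k] [Ring A] [Algebra k A]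
    (I : TwoSidedIdeal A) : Submodule k A where
  carrier := I
  add_mem' := fun ha hb => I.add_mem ha hb
  zero_mem' := I.zero_mem
  smul_mem' := fun c x hx => by
    rw [Algebra.smul_def]
    exact I.mul_mem_left _ _ hx

/-- Projective simplicity of a locally finite ℕ-graded `k`-algebra. -/
def ProjectivelySimple (k : Type*) {A : Type*} [Field k] [Ring A] [Algebra k A]
    (𝒜 : ℕ → Submodule k A) [GradedAlgebra 𝒜] : Prop :=
  ¬ FiniteDimensional k A ∧
  ∀ I : TwoSidedIdeal A, I ≠ ⊥ →
    (∀ x ∈ I, ∀ n, (DirectSum.decompose 𝒜 x n : A) ∈ I) →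
    FiniteDimensional k (A ⧸ I.ksub k)

open DirectSum

set_option maxHeartbeats 1000000

lemma tsi_mem_bot {R : Type*} [Ring R] {x : R} : x ∈ (⊥ : TwoSidedIdeal R) ↔ x = 0 :=
  Iff.rfl

lemma TwoSidedIdeal.mem_ksub {k A : Type*} [CommSemiring k] [Ring A] [Algebra k A]
    (I : TwoSidedIdeal A) {a : A} : a ∈ I.ksub k ↔ a ∈ I := Iff.rfl


section aux

variable {k A : Type*} [Field k] [Ring A] [Algebra k A]
variable (𝒜 : ℕ → Submodule k A) [GradedAlgebra 𝒜]

/-- The `n`-th homogeneous projection, as a `k`-linear map `A →ₗ[k] A`. -/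
noncomputable def gproj (n : ℕ) : A →ₗ[k] A where
  toFun a := (DirectSum.decompose 𝒜 a n : A)
  map_add' x y := by
    simp only [DirectSum.decompose_add, DirectSum.add_apply, Submodule.coe_add]
  map_smul' c x := by
    simp only [DirectSum.decompose_smul, DirectSum.smul_apply, SetLike.val_smul, RingHom.id_apply]

lemma gproj_apply (n : ℕ) (a : A) : gproj 𝒜 n a = (DirectSum.decompose 𝒜 a n : A) := rfl

lemma gproj_mem (n : ℕ) (a : A) : gproj 𝒜 n a ∈ 𝒜 n := (DirectSum.decompose 𝒜 a n).2

lemma gproj_of_mem_same {n : ℕ} {a : A} (h : a ∈ 𝒜 n) : gproj 𝒜 n a = a :=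
  DirectSum.decompose_of_mem_same 𝒜 h

lemma gproj_of_mem_ne {m n : ℕ} {a : A} (h : a ∈ 𝒜 m) (hmn : m ≠ n) : gproj 𝒜 n a = 0 :=
  DirectSum.decompose_of_mem_ne 𝒜 h hmn

lemma gproj_mul_of_mem_left {i : ℕ} {a : A} (ha : a ∈ 𝒜 i) (m : ℕ) (x : A) :
    gproj 𝒜 (i + m) (a * x) = a * gproj 𝒜 m x := by
  refine DirectSum.Decomposition.inductionOn 𝒜
    (motive := fun y => gproj 𝒜 (i + m) (a * y) = a * gproj 𝒜 m y) ?_ (fun {l} xl => ?_) (fun y z hy hz => ?_) x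
  · simp
  · have hmem : a * (xl : A) ∈ 𝒜 (i + l) := SetLike.mul_mem_graded ha xl.2
    rcases eq_or_ne l m with rfl | hlm
    · rw [gproj_of_mem_same 𝒜 hmem, gproj_of_mem_same 𝒜 xl.2]
    · rw [gproj_of_mem_ne 𝒜 hmem (by omega), gproj_of_mem_ne 𝒜 xl.2 hlm, mul_zero]
  · rw [mul_add, map_add, map_add, hy, hz, mul_add]

lemma gproj_mul_of_mem_right {i : ℕ} {a : A} (ha : a ∈ 𝒜 i) (m : ℕ) (x : A) :
    gproj 𝒜 (m + i) (x * a) = gproj 𝒜 m x * a := by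
  refine DirectSum.Decomposition.inductionOn 𝒜
    (motive := fun y => gproj 𝒜 (m + i) (y * a) = gproj 𝒜 m y * a) ?_ (fun {l} xl => ?_) (fun y z hy hz => ?_) x
  · simp
  · have hmem : (xl : A) * a ∈ 𝒜 (l + i) := SetLike.mul_mem_graded xl.2 ha
    rcases eq_or_ne l m with rfl | hlm
    · rw [gproj_of_mem_same 𝒜 hmem, gproj_of_mem_same 𝒜 xl.2]
    · rw [gproj_of_mem_ne 𝒜 hmem (by omega), gproj_of_mem_ne 𝒜 xl.2 hlm, zero_mul]
  · rw [add_mul, map_add, map_add, hy, hz, add_mul]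

lemma gproj_mul_of_mem_left_lt {i : ℕ} {a : A} (ha : a ∈ 𝒜 i) {m : ℕ} (hm : m < i) (x : A) :
    gproj 𝒜 m (a * x) = 0 := by
  refine DirectSum.Decomposition.inductionOn 𝒜
    (motive := fun y => gproj 𝒜 m (a * y) = 0) ?_ (fun {l} xl => ?_) (fun y z hy hz => ?_) x
  · simp
  · have hmem : a * (xl : A) ∈ 𝒜 (i + l) := SetLike.mul_mem_graded ha xl.2
    rw [gproj_of_mem_ne 𝒜 hmem (by omega)]
  · rw [mul_add, map_add, hy, hz, add_zero]

lemma gproj_mul_of_mem_right_lt {i : ℕ} {a : A} (ha : a ∈ 𝒜 i) {m : ℕ} (hm : m < i) (x : A) :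
    gproj 𝒜 m (x * a) = 0 := by
  refine DirectSum.Decomposition.inductionOn 𝒜
    (motive := fun y => gproj 𝒜 m (y * a) = 0) ?_ (fun {l} xl => ?_) (fun y z hy hz => ?_) x
  · simp
  · have hmem : (xl : A) * a ∈ 𝒜 (l + i) := SetLike.mul_mem_graded xl.2 ha
    rw [gproj_of_mem_ne 𝒜 hmem (by omega)]
  · rw [add_mul, map_add, hy, hz, add_zero]

variable (J : TwoSidedIdeal A)

/-- Degree-`n` leading terms of elements of `J`. -/
def topSub (n : ℕ) : Submodule k A where
  carrier := {a | ∃ x, x ∈ J ∧ (∀ m, n < m → gproj 𝒜 m x = 0) ∧ gproj 𝒜 n x = a}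
  zero_mem' := ⟨0, J.zero_mem, fun m _ => map_zero _, map_zero _⟩
  add_mem' := by
    rintro a b ⟨x, hx, hbx, rfl⟩ ⟨y, hy, hby, rfl⟩
    exact ⟨x + y, J.add_mem hx hy, fun m hm => by rw [map_add, hbx m hm, hby m hm, add_zero],
      (map_add _ _ _)⟩
  smul_mem' := by
    rintro c a ⟨x, hx, hbx, rfl⟩
    refine ⟨c • x, ?_, fun m hm => by rw [map_smul, hbx m hm, smul_zero], map_smul _ _ _⟩
    rw [Algebra.smul_def]
    exact J.mul_mem_left _ _ hx

lemma topSub_le (n : ℕ) : topSub 𝒜 J n ≤ 𝒜 n := by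
  rintro a ⟨x, _, _, rfl⟩
  exact gproj_mem 𝒜 n x

lemma mul_mem_topSub_left {i n : ℕ} {a t : A} (ha : a ∈ 𝒜 i) (ht : t ∈ topSub 𝒜 J n) :
    a * t ∈ topSub 𝒜 J (i + n) := by
  obtain ⟨x, hx, hbx, rfl⟩ := ht
  refine ⟨a * x, J.mul_mem_left _ _ hx, fun m hm => ?_, gproj_mul_of_mem_left 𝒜 ha n x⟩
  rcases lt_or_ge m i with h | h
  · exact gproj_mul_of_mem_left_lt 𝒜 ha h x
  · obtain ⟨l, rfl⟩ := Nat.exists_eq_add_of_le h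
    rw [gproj_mul_of_mem_left 𝒜 ha l x, hbx l (by omega), mul_zero]

lemma mul_mem_topSub_right {i n : ℕ} {a t : A} (ha : a ∈ 𝒜 i) (ht : t ∈ topSub 𝒜 J n) :
    t * a ∈ topSub 𝒜 J (n + i) := by
  obtain ⟨x, hx, hbx, rfl⟩ := ht
  refine ⟨x * a, J.mul_mem_right _ _ hx, fun m hm => ?_, gproj_mul_of_mem_right 𝒜 ha n x⟩
  rcases lt_or_ge m i with h | h
  · exact gproj_mul_of_mem_right_lt 𝒜 ha h x
  · obtain ⟨l, rfl⟩ := Nat.exists_eq_add_of_le h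
    rw [add_comm i l, gproj_mul_of_mem_right 𝒜 ha l x, hbx l (by omega), zero_mul]

/-- The set of elements all of whose homogeneous components are leading terms of `J`. -/
def leadCar : Set A := {a | ∀ n, gproj 𝒜 n a ∈ topSub 𝒜 J n}

lemma leadCar_zero : (0 : A) ∈ leadCar 𝒜 J := fun n => by
  rw [map_zero]; exact Submodule.zero_mem _

lemma leadCar_add {a b : A} (ha : a ∈ leadCar 𝒜 J) (hb : b ∈ leadCar 𝒜 J) :
    a + b ∈ leadCar 𝒜 J := fun n => by
  rw [map_add]; exact Submodule.add_mem _ (ha n) (hb n)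

lemma leadCar_neg {a : A} (ha : a ∈ leadCar 𝒜 J) : -a ∈ leadCar 𝒜 J := fun n => by
  rw [map_neg]; exact Submodule.neg_mem _ (ha n)

lemma leadCar_mul_left {a b : A} (hb : b ∈ leadCar 𝒜 J) : a * b ∈ leadCar 𝒜 J := by
  refine DirectSum.Decomposition.inductionOn 𝒜
    (motive := fun y => y * b ∈ leadCar 𝒜 J) ?_ (fun {i} xi => ?_) (fun y z hy hz => ?_) a
  · rw [zero_mul]; exact leadCar_zero 𝒜 J
  · -- write b as the sum of its homogeneous components
    classical
    intro n
    have hb' : (xi : A) * b = ∑ j ∈ (DirectSum.decompose 𝒜 b).support, (xi : A) * gproj 𝒜 j b := by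
      rw [← Finset.mul_sum]
      congr 1
      exact (DirectSum.sum_support_decompose 𝒜 b).symm
    rw [hb', map_sum]
    refine Submodule.sum_mem _ fun j _ => ?_
    have hmem : (xi : A) * gproj 𝒜 j b ∈ topSub 𝒜 J (i + j) :=
      mul_mem_topSub_left 𝒜 J xi.2 (hb j)
    have hmem' : (xi : A) * gproj 𝒜 j b ∈ 𝒜 (i + j) :=
      SetLike.mul_mem_graded xi.2 (gproj_mem 𝒜 j b)
    rcases eq_or_ne (i + j) n with rfl | hne
    · rwa [gproj_of_mem_same 𝒜 hmem']
    · rw [gproj_of_mem_ne 𝒜 hmem' hne]; exact Submodule.zero_mem _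
  · rw [add_mul]; exact leadCar_add 𝒜 J hy hz

lemma leadCar_mul_right {a b : A} (ha : a ∈ leadCar 𝒜 J) : a * b ∈ leadCar 𝒜 J := by
  refine DirectSum.Decomposition.inductionOn 𝒜
    (motive := fun y => a * y ∈ leadCar 𝒜 J) ?_ (fun {i} xi => ?_) (fun y z hy hz => ?_) b
  · rw [mul_zero]; exact leadCar_zero 𝒜 J
  · classical
    intro n
    have ha' : a * (xi : A) = ∑ j ∈ (DirectSum.decompose 𝒜 a).support, gproj 𝒜 j a * (xi : A) := by
      rw [← Finset.sum_mul]
      congr 1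
      exact (DirectSum.sum_support_decompose 𝒜 a).symm
    rw [ha', map_sum]
    refine Submodule.sum_mem _ fun j _ => ?_
    have hmem : gproj 𝒜 j a * (xi : A) ∈ topSub 𝒜 J (j + i) :=
      mul_mem_topSub_right 𝒜 J xi.2 (ha j)
    have hmem' : gproj 𝒜 j a * (xi : A) ∈ 𝒜 (j + i) :=
      SetLike.mul_mem_graded (gproj_mem 𝒜 j a) xi.2
    rcases eq_or_ne (j + i) n with rfl | hne
    · rwa [gproj_of_mem_same 𝒜 hmem']
    · rw [gproj_of_mem_ne 𝒜 hmem' hne]; exact Submodule.zero_mem _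
  · rw [mul_add]; exact leadCar_add 𝒜 J hy hz

/-- The two-sided ideal of leading terms of `J`. -/
def leadIdeal : TwoSidedIdeal A :=
  TwoSidedIdeal.mk' (leadCar 𝒜 J) (leadCar_zero 𝒜 J) (leadCar_add 𝒜 J)
    (leadCar_neg 𝒜 J) (leadCar_mul_left 𝒜 J) (leadCar_mul_right 𝒜 J)

lemma mem_leadIdeal {a : A} : a ∈ leadIdeal 𝒜 J ↔ ∀ n, gproj 𝒜 n a ∈ topSub 𝒜 J n :=
  TwoSidedIdeal.mem_mk' _ _ _ _ _ _ a

end aux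



/-- A `k`-algebra is just infinite dimensional if it is infinite dimensional over `k` and
every nonzero two-sided ideal has finite codimension. -/
theorem projectively_simple_just_infinite
    (k : Type*) {A : Type*} [Field k] [Ring A] [Algebra k A]
    (𝒜 : ℕ → Submodule k A) [GradedAlgebra 𝒜]
    (hlf : ∀ n, FiniteDimensional k (𝒜 n))
    (hm : ∃ n, 1 ≤ n ∧ 𝒜 n ≠ ⊥)
    (hps : ProjectivelySimple k 𝒜) :
    ¬ FiniteDimensional k A ∧
    ∀ J : TwoSidedIdeal A, J ≠ ⊥ → FiniteDimensional k (A ⧸ J.ksub k) := by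
  classical
  refine ⟨hps.1, fun J hJ => ?_⟩
  set I : TwoSidedIdeal A := leadIdeal 𝒜 J with hI
  -- a nonzero element of J
  obtain ⟨x0, hx0J, hx0⟩ : ∃ x, x ∈ J ∧ x ≠ 0 := by
    by_contra h
    push_neg at h
    exact hJ (eq_bot_iff.mpr fun x hx => tsi_mem_bot.mpr (h x hx))
  -- the leading ideal is nonzero
  have hD : (DirectSum.decompose 𝒜 x0).support.Nonempty := by
    rw [Finset.nonempty_iff_ne_empty, Ne, DFinsupp.support_eq_empty]
    intro h
    exact hx0 (by simpa using congrArg (DirectSum.decompose 𝒜).symm h)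
  set n0 : ℕ := (DirectSum.decompose 𝒜 x0).support.max' hD with hn0
  have htne : gproj 𝒜 n0 x0 ≠ 0 := by
    have := (DirectSum.decompose 𝒜 x0).mem_support_toFun n0
    intro h
    exact ((DirectSum.decompose 𝒜 x0).mem_support_toFun n0).mp
      ((DirectSum.decompose 𝒜 x0).support.max'_mem hD) (Subtype.ext h)
  have hbd0 : ∀ m, n0 < m → gproj 𝒜 m x0 = 0 := by
    intro m hm'
    have : m ∉ (DirectSum.decompose 𝒜 x0).support := fun hmem =>
      absurd (Finset.le_max' _ m hmem) (not_le.mpr hm')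
    have h0 : DirectSum.decompose 𝒜 x0 m = 0 := by
      by_contra h
      exact this (DFinsupp.mem_support_iff.mpr h)
    rw [gproj_apply, h0, ZeroMemClass.coe_zero]
  have htT : gproj 𝒜 n0 x0 ∈ topSub 𝒜 J n0 := ⟨x0, hx0J, hbd0, rfl⟩
  have homog_mem_lead : ∀ {n : ℕ} {t : A}, t ∈ 𝒜 n → t ∈ topSub 𝒜 J n → t ∈ I := by
    intro n t htn htt
    rw [hI, mem_leadIdeal]
    intro m
    rcases eq_or_ne n m with rfl | hne
    · rwa [gproj_of_mem_same 𝒜 htn]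
    · rw [gproj_of_mem_ne 𝒜 htn hne]
      exact Submodule.zero_mem _
  have hne : I ≠ ⊥ := by
    intro h
    exact htne (tsi_mem_bot.mp
      (h ▸ homog_mem_lead (gproj_mem 𝒜 n0 x0) htT))
  have hgr : ∀ x ∈ I, ∀ n, (DirectSum.decompose 𝒜 x n : A) ∈ I := by
    intro x hx n
    rw [hI, mem_leadIdeal] at hx
    exact homog_mem_lead (gproj_mem 𝒜 n x) (hx n)
  have hFDI : FiniteDimensional k (A ⧸ I.ksub k) := hps.2 I hne hgr
  -- choose complements of the leading submodules inside each graded piece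
  choose W' hW' using fun n => Submodule.exists_isCompl ((topSub 𝒜 J n).comap (𝒜 n).subtype)
  set Wn : ℕ → Submodule k A := fun n => (W' n).map (𝒜 n).subtype with hWn
  have hWn_le : ∀ n, Wn n ≤ 𝒜 n := fun n => Submodule.map_subtype_le _ _
  have hsupn : ∀ n, 𝒜 n ≤ topSub 𝒜 J n ⊔ Wn n := by
    intro n
    have h1 : Submodule.map (𝒜 n).subtype
        ((topSub 𝒜 J n).comap (𝒜 n).subtype ⊔ W' n) = 𝒜 n := by
      rw [(hW' n).sup_eq_top, Submodule.map_top, Submodule.range_subtype]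
    rw [Submodule.map_sup, Submodule.map_comap_subtype] at h1
    rw [← h1]
    exact sup_le_sup inf_le_right le_rfl
  have hdisjn : ∀ n, ∀ a, a ∈ topSub 𝒜 J n → a ∈ Wn n → a = 0 := by
    intro n a h1 h2
    obtain ⟨b, hb, rfl⟩ := h2
    have hbT : b ∈ (topSub 𝒜 J n).comap (𝒜 n).subtype := h1
    have : b ∈ (⊥ : Submodule k (𝒜 n)) := (hW' n).disjoint.le_bot ⟨hbT, hb⟩
    rw [Submodule.mem_bot] at this
    rw [this]
    rfl
  set WW : Submodule k A := ⨆ n, Wn n with hWW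
  have hWWcomp : ∀ w ∈ WW, ∀ n, gproj 𝒜 n w ∈ Wn n := by
    have hle : WW ≤ ⨅ n, (Wn n).comap (gproj 𝒜 n) := by
      refine iSup_le fun m => le_iInf fun n => ?_
      intro w hw
      have hwm : w ∈ 𝒜 m := hWn_le m hw
      rcases eq_or_ne m n with rfl | hne
      · rw [Submodule.mem_comap, gproj_of_mem_same 𝒜 hwm]
        exact hw
      · rw [Submodule.mem_comap, gproj_of_mem_ne 𝒜 hwm hne]
        exact Submodule.zero_mem _
    intro w hw n
    exact Submodule.mem_iInf _ |>.mp (hle hw) n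
  -- WW is finite dimensional since it embeds into A ⧸ I.ksub k
  have hWWfd : FiniteDimensional k WW := by
    refine FiniteDimensional.of_injective ((I.ksub k).mkQ.comp WW.subtype) ?_
    rw [← LinearMap.ker_eq_bot, LinearMap.ker_comp, Submodule.ker_mkQ]
    rw [Submodule.eq_bot_iff]
    rintro ⟨w, hwWW⟩ hw
    have hwI : w ∈ I := (TwoSidedIdeal.mem_ksub (k := k) I).mp hw
    rw [hI, mem_leadIdeal] at hwI
    have hz : ∀ n, gproj 𝒜 n w = 0 := fun n =>
      hdisjn n _ (hwI n) (hWWcomp w hwWW n)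
    have : w = 0 := by
      rw [← DirectSum.sum_support_decompose 𝒜 w]
      exact Finset.sum_eq_zero fun m _ => hz m
    exact Subtype.ext this
  -- every graded piece lies in J.ksub ⊔ WW, by strong induction on the degree
  set K : Submodule k A := J.ksub k ⊔ WW with hK
  have hWn_le_K : ∀ n, Wn n ≤ K := fun n =>
    le_trans (le_iSup Wn n) le_sup_right
  have hdegK : ∀ n : ℕ, ∀ a, a ∈ 𝒜 n → a ∈ K := by
    intro n
    induction n using Nat.strong_induction_on with
    | _ n ih =>
      intro a ha
      have ha' : a ∈ topSub 𝒜 J n ⊔ Wn n := hsupn n ha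
      rw [Submodule.mem_sup] at ha'
      obtain ⟨t, ht, w, hw, rfl⟩ := ha'
      refine Submodule.add_mem _ ?_ (hWn_le_K n hw)
      obtain ⟨x, hxJ, hbx, rfl⟩ := ht
      have hxK : x ∈ K := Submodule.mem_sup_left ((TwoSidedIdeal.mem_ksub J).mpr hxJ)
      have hrest : x - gproj 𝒜 n x =
          ∑ m ∈ (DirectSum.decompose 𝒜 x).support.erase n, gproj 𝒜 m x := by
        by_cases hn : n ∈ (DirectSum.decompose 𝒜 x).support
        · have h1 := Finset.sum_erase_add _ (fun m => gproj 𝒜 m x) hn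
          have hsum : (∑ m ∈ (DirectSum.decompose 𝒜 x).support, gproj 𝒜 m x) = x :=
            DirectSum.sum_support_decompose 𝒜 x
          exact (eq_sub_iff_add_eq.mpr (h1.trans hsum)).symm
        · have h0 : gproj 𝒜 n x = 0 := by
            have : DirectSum.decompose 𝒜 x n = 0 := by
              by_contra h
              exact hn (DFinsupp.mem_support_iff.mpr h)
            rw [gproj_apply, this, ZeroMemClass.coe_zero]
          rw [h0, sub_zero, Finset.erase_eq_of_notMem hn]
          exact (DirectSum.sum_support_decompose 𝒜 x).symm
      have hrestK : x - gproj 𝒜 n x ∈ K := by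
        rw [hrest]
        refine Submodule.sum_mem _ fun m hmem => ?_
        have hmn : m ≠ n := Finset.ne_of_mem_erase hmem
        have hmlt : m < n := by
          rcases lt_or_ge m n with h | h
          · exact h
          · exfalso
            have hlt : n < m := lt_of_le_of_ne h (Ne.symm hmn)
            have := hbx m hlt
            have hms : m ∈ (DirectSum.decompose 𝒜 x).support :=
              Finset.mem_of_mem_erase hmem
            rw [DFinsupp.mem_support_iff] at hms
            exact hms (by
              rw [gproj_apply] at this
              exact Subtype.ext this)
        exact ih m hmlt _ (gproj_mem 𝒜 m x)
      have : gproj 𝒜 n x = x - (x - gproj 𝒜 n x) := by abel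
      rw [this]
      exact Submodule.sub_mem _ hxK hrestK
  have hKtop : K = ⊤ := by
    rw [eq_top_iff]
    intro a _
    rw [← DirectSum.sum_support_decompose 𝒜 a]
    exact Submodule.sum_mem _ fun m _ => hdegK m _ (gproj_mem 𝒜 m a)
  refine Module.Finite.of_surjective ((J.ksub k).mkQ.comp WW.subtype) ?_
  rw [← LinearMap.range_eq_top, LinearMap.range_comp, Submodule.range_subtype,
    Submodule.map_mkQ_eq_top]
  exact hKtop
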